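/- arXiv:2005.13991 — 3 statements merged into one kernel-verified Lean document; each statement's English description precedes it below -/
import Mathlib

section
/- Let m be a positive integer, let B : ℝ^{2m} → Mat_{2m×2m}(ℝ) be a continuous map such that B(x) is skew-symmetric for every x, and let H : ℝ^{2m} → ℝ be continuously differentiable. If Y₁, Y₂ ∈ ℝ^{2m} and h ∈ ℝ satisfy the implicit relation Y₂ = Y₁ + h · B((Y₁+Y₂)/2) · ∫₀¹ ∇H(Y₁ + θ(Y₂−Y₁)) dθ, then H(Y₂) = H(Y₁). That is, the deterministic averaged-gradient midpoint step exactly preserves the Hamiltonian of any Poisson system. -/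
open Matrix

lemma skew_inner_zero {n : ℕ} (M : Matrix (Fin n) (Fin n) ℝ) (hM : Mᵀ = -M)
    (v : EuclideanSpace ℝ (Fin n)) :
    inner ℝ v (Matrix.toEuclideanLin M v) = (0 : ℝ) := by
  have key : inner ℝ v (Matrix.toEuclideanLin M v) =
      (WithLp.equiv 2 _ v) ⬝ᵥ (M *ᵥ (WithLp.equiv 2 _ v)) := by
    simp [PiLp.inner_apply, dotProduct, RCLike.inner_apply, mul_comm]
  rw [key]
  set w := WithLp.equiv 2 _ v
  have h1 : w ⬝ᵥ (M *ᵥ w) = -(w ⬝ᵥ (M *ᵥ w)) := by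
    conv_lhs => rw [Matrix.dotProduct_mulVec, ← Matrix.mulVec_transpose, hM,
      Matrix.neg_mulVec, neg_dotProduct, dotProduct_comm]
  linarith

/-- The deterministic averaged-gradient midpoint step
`Y₂ = Y₁ + h B((Y₁+Y₂)/2) ∫₀¹ ∇H(Y₁+θ(Y₂−Y₁)) dθ` exactly preserves the
Hamiltonian `H` of any Poisson system with skew-symmetric structure matrix `B`. -/
theorem drift_preserving_midstep_preserves_energy
    (m : ℕ) (hm : 0 < m)
    (B : EuclideanSpace ℝ (Fin (2 * m)) → Matrix (Fin (2 * m)) (Fin (2 * m)) ℝ)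
    (hBcont : Continuous B)
    (hBskew : ∀ x, (B x)ᵀ = -(B x))
    (H : EuclideanSpace ℝ (Fin (2 * m)) → ℝ)
    (hH : ContDiff ℝ 1 H)
    (h : ℝ) (Y₁ Y₂ : EuclideanSpace ℝ (Fin (2 * m)))
    (hrel : Y₂ = Y₁ + h • (Matrix.toEuclideanLin (B ((2 : ℝ)⁻¹ • (Y₁ + Y₂))))
        (∫ θ in (0 : ℝ)..1, gradient H (Y₁ + θ • (Y₂ - Y₁)))) :
    H Y₂ = H Y₁ := by
  set d : EuclideanSpace ℝ (Fin (2 * m)) := Y₂ - Y₁ with hd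
  set x : ℝ → EuclideanSpace ℝ (Fin (2 * m)) := fun θ => Y₁ + θ • d with hx
  have hdiff : Differentiable ℝ H := hH.differentiable one_ne_zero
  have hgradcont : Continuous (fun y => gradient H y) := by
    have hfd : Continuous (fderiv ℝ H) := hH.continuous_fderiv one_ne_zero
    exact (InnerProductSpace.toDual ℝ
      (EuclideanSpace ℝ (Fin (2 * m)))).symm.continuous.comp hfd
  have hxcont : Continuous x :=
    continuous_const.add (continuous_id.smul continuous_const)
  have hcont : Continuous (fun θ : ℝ => gradient H (x θ)) := hgradcont.comp hxcont
  have hderiv : ∀ θ ∈ Set.uIcc (0:ℝ) 1,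
      HasDerivAt (fun θ => H (x θ)) (inner ℝ (gradient H (x θ)) d : ℝ) θ := by
    intro θ _
    have h1 : HasFDerivAt H
        (InnerProductSpace.toDual ℝ _ (gradient H (x θ))) (x θ) :=
      ((hdiff (x θ)).hasGradientAt).hasFDerivAt
    have h2 : HasDerivAt x d θ := by
      have h3 : HasDerivAt (fun t : ℝ => Y₁ + t • d) ((1:ℝ) • d) θ :=
        ((hasDerivAt_id θ).smul_const d).const_add Y₁
      rw [one_smul] at h3
      exact h3
    simpa [Function.comp_def] using h1.comp_hasDerivAt θ h2
  have hint : IntervalIntegrable (fun θ => (inner ℝ (gradient H (x θ)) d : ℝ))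
      MeasureTheory.volume 0 1 :=
    Continuous.intervalIntegrable (hcont.inner continuous_const) 0 1
  have hftc : ∫ θ in (0:ℝ)..1, (inner ℝ (gradient H (x θ)) d : ℝ) = H (x 1) - H (x 0) :=
    intervalIntegral.integral_eq_sub_of_hasDerivAt hderiv hint
  set v : EuclideanSpace ℝ (Fin (2 * m)) := ∫ θ in (0:ℝ)..1, gradient H (x θ) with hv
  have hswap : ∫ θ in (0:ℝ)..1, (inner ℝ (gradient H (x θ)) d : ℝ) = inner ℝ v d := by
    have := ((innerSL ℝ (E := EuclideanSpace ℝ (Fin (2 * m)))).flip d).intervalIntegral_comp_comm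
      (μ := MeasureTheory.volume) (hcont.intervalIntegrable 0 1) (a := 0) (b := 1)
    simpa only [ContinuousLinearMap.flip_apply, innerSL_apply_apply] using this
  have hAv : d = h • (Matrix.toEuclideanLin (B ((2 : ℝ)⁻¹ • (Y₁ + Y₂)))) v := by
    rw [hd]
    conv_lhs => rw [hrel]
    abel
  have hzero : (inner ℝ v d : ℝ) = 0 := by
    rw [hAv, real_inner_smul_right, skew_inner_zero _ (hBskew _) v, mul_zero]
  have hfin : H (x 1) - H (x 0) = 0 := by rw [← hftc, hswap, hzero]
  have hx1 : x 1 = Y₂ := by simp [hx, hd]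
  have hx0 : x 0 = Y₁ := by simp [hx]
  rw [hx1, hx0] at hfin
  linarith
end

section
/- Let m be a positive integer, B : ℝ^{2m} → Mat_{2m×2m}(ℝ) a continuous skew-symmetric-matrix-valued map, H : ℝ^{2m} → ℝ continuously differentiable, and A ∈ Mat_{2m×2m}(ℝ) a symmetric matrix such that the quadratic function C(x) = ½ xᵀ A x is a Casimir, i.e. (A x)ᵀ B(x) = 0 (as a row vector) for all x ∈ ℝ^{2m}. If Y₁, Y₂ ∈ ℝ^{2m} and h ∈ ℝ satisfy Y₂ = Y₁ + h · B((Y₁+Y₂)/2) · ∫₀¹ ∇H(Y₁ + θ(Y₂−Y₁)) dθ, then C(Y₂) = C(Y₁). -/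
open Matrix
open scoped RealInnerProductSpace

/-- The deterministic averaged-gradient midpoint step exactly preserves
any quadratic Casimir `C(x) = ½ xᵀ A x` (with `A` symmetric and `(Ax)ᵀ B(x) = 0` for all `x`)
of the Poisson system with skew-symmetric structure matrix `B`. -/
theorem drift_preserving_midstep_preserves_quadratic_casimir
    (m : ℕ) (hm : 0 < m)
    (B : EuclideanSpace ℝ (Fin (2 * m)) → Matrix (Fin (2 * m)) (Fin (2 * m)) ℝ)
    (hBcont : Continuous B)
    (hBskew : ∀ x, (B x)ᵀ = -(B x))
    (H : EuclideanSpace ℝ (Fin (2 * m)) → ℝ)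
    (hH : ContDiff ℝ 1 H)
    (A : Matrix (Fin (2 * m)) (Fin (2 * m)) ℝ)
    (hA : A.IsSymm)
    (hCasimir : ∀ x : EuclideanSpace ℝ (Fin (2 * m)),
      Matrix.vecMul (WithLp.equiv 2 (Fin (2 * m) → ℝ) (Matrix.toEuclideanLin A x)) (B x) = 0)
    (h : ℝ) (Y₁ Y₂ : EuclideanSpace ℝ (Fin (2 * m)))
    (hrel : Y₂ = Y₁ + h • (Matrix.toEuclideanLin (B ((2 : ℝ)⁻¹ • (Y₁ + Y₂))))
        (∫ θ in (0 : ℝ)..1, gradient H (Y₁ + θ • (Y₂ - Y₁)))) :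
    (1 / 2 : ℝ) * ⟪Y₂, Matrix.toEuclideanLin A Y₂⟫
      = (1 / 2 : ℝ) * ⟪Y₁, Matrix.toEuclideanLin A Y₁⟫ := by
  set L := Matrix.toEuclideanLin A with hL
  have hherm : A.IsHermitian := by rw [Matrix.IsHermitian]; simpa using hA.eq
  have hsym : L.IsSymmetric := Matrix.isHermitian_iff_isSymmetric.mp hherm
  set x₀ : EuclideanSpace ℝ (Fin (2 * m)) := (2 : ℝ)⁻¹ • (Y₁ + Y₂) with hx₀
  set v : EuclideanSpace ℝ (Fin (2 * m)) := ∫ θ in (0 : ℝ)..1, gradient H (Y₁ + θ • (Y₂ - Y₁)) with hv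
  -- key: ⟪Y₂ - Y₁, L (Y₁ + Y₂)⟫ = 0
  have hdiff : Y₂ - Y₁ = h • (Matrix.toEuclideanLin (B x₀)) v := by
    rw [hrel]; abel
  have hM : (Y₁ + Y₂) = (2 : ℝ) • x₀ := by
    rw [hx₀, smul_smul]; norm_num
  have hinner : ∀ a b : EuclideanSpace ℝ (Fin (2 * m)),
      ⟪a, b⟫ = (WithLp.equiv 2 _ a) ⬝ᵥ (WithLp.equiv 2 _ b) := by
    intro a b
    simp [EuclideanSpace.inner_eq_star_dotProduct]
    exact dotProduct_comm _ _
  have hkey : ⟪Y₂ - Y₁, L (Y₁ + Y₂)⟫ = 0 := by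
    rw [hdiff, hM, L.map_smul, inner_smul_left, inner_smul_right]
    have : ⟪(Matrix.toEuclideanLin (B x₀)) v, L x₀⟫ = 0 := by
      rw [real_inner_comm, hinner]
      change _ ⬝ᵥ (B x₀ *ᵥ WithLp.equiv 2 _ v) = 0
      rw [dotProduct_mulVec, hCasimir x₀, zero_dotProduct]
    simp [this]
  have hexp : ⟪Y₂ - Y₁, L (Y₁ + Y₂)⟫ = ⟪Y₂, L Y₂⟫ - ⟪Y₁, L Y₁⟫ := by
    rw [map_add, inner_sub_left, inner_add_right, inner_add_right]
    have h12 : ⟪Y₂, L Y₁⟫ = ⟪Y₁, L Y₂⟫ := by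
      rw [← hsym Y₂ Y₁, real_inner_comm]
    ring_nf
    rw [h12]; ring
  have : ⟪Y₂, L Y₂⟫ = ⟪Y₁, L Y₁⟫ := by linarith [hexp ▸ hkey]
  rw [this]
end

section
/- Let m, d be positive integers, h > 0, Σ ∈ Mat_{m×d}(ℝ), B : ℝ^{2m} → Mat_{2m×2m}(ℝ) continuous with B(x) skew-symmetric for every x, V : ℝᵐ → ℝ of class C¹, H(p,q) = ½|p|² + V(q), and let A ∈ Mat_{2m×2m}(ℝ) be symmetric with upper-left m×m block a, such that C(x) = ½ xᵀ A x satisfies (A x)ᵀ B(x) = 0 for all x (C is a Casimir). Let (X_n), (Y₁ⁿ), (Y₂ⁿ), (ξ_n), (η_n) be as in the drift-preserving scheme: almost surely Y₁ⁿ = X_n + (Σξ_n, 0), Y₂ⁿ = Y₁ⁿ + h B((Y₁ⁿ+Y₂ⁿ)/2) ∫₀¹ ∇H(Y₁ⁿ+θ(Y₂ⁿ−Y₁ⁿ)) dθ, X_{n+1} = Y₂ⁿ + (Ση_n, 0), with ξ_n, η_n iid N(0,(h/2)·Id_d), ξ_n independent of X_n, η_n independent of (X_n, ξ_n, Y₂ⁿ),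 and E[|X_n|²], E[|Y₂ⁿ|²] < ∞ for all n. Then for every n ∈ ℕ, E[C(X_n)] = E[C(X₀)] + (1/2)·Tr(Σᵀ a Σ)·t_n, where t_n = n h. (Trace formula for the quadratic Casimir of the drift-preserving scheme.) -/
open Matrix MeasureTheory ProbabilityTheory
open scoped RealInnerProductSpace

/-- An `ℝᵈ`-valued random vector is centered Gaussian with covariance `s·Id_d`
iff every linear functional `⟨t, ·⟩` of it is a real Gaussian `N(0, s‖t‖²)`. -/
def IsCenteredGaussianVec {Ω : Type*} [MeasurableSpace Ω] (μ : Measure Ω)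
    (d : ℕ) (s : ℝ) (ξ : Ω → EuclideanSpace ℝ (Fin d)) : Prop :=
  Measurable ξ ∧ ∀ t : EuclideanSpace ℝ (Fin d),
    Measure.map (fun ω => ⟪t, ξ ω⟫) μ = gaussianReal 0 (Real.toNNReal (s * ‖t‖ ^ 2))

/-- The vector `(v, 0) ∈ ℝᵐ × ℝᵐ ≅ ℝ^{2m}` whose first `m` components are `v`
and last `m` components vanish. -/
noncomputable def pad (m : ℕ) (v : EuclideanSpace ℝ (Fin m)) :
    EuclideanSpace ℝ (Fin (m + m)) :=
  (WithLp.equiv 2 (Fin (m + m) → ℝ)).symm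
    (Fin.append (WithLp.equiv 2 (Fin m → ℝ) v) 0)

/-- The separable Hamiltonian `H(p,q) = ½ ∑ⱼ pⱼ² + V(q)` on `ℝᵐ × ℝᵐ ≅ ℝ^{2m}`. -/
noncomputable def Ham (m : ℕ) (V : EuclideanSpace ℝ (Fin m) → ℝ)
    (x : EuclideanSpace ℝ (Fin (m + m))) : ℝ :=
  (1 / 2 : ℝ) * ∑ j : Fin m, x (Fin.castAdd m j) ^ 2
    + V ((WithLp.equiv 2 (Fin m → ℝ)).symm fun j => x (Fin.natAdd m j))

/-- The quadratic function `C(x) = ½ xᵀ A x`. -/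
noncomputable def quadCas (m : ℕ) (A : Matrix (Fin (m + m)) (Fin (m + m)) ℝ)
    (x : EuclideanSpace ℝ (Fin (m + m))) : ℝ :=
  (1 / 2 : ℝ) * ⟪x, Matrix.toEuclideanLin A x⟫



section AuxGaussian

open Real Set Filter
open scoped NNReal ENNReal



lemma aux_tendsto_mul_exp_atTop {b : ℝ} (hb : 0 < b) :
    Tendsto (fun x : ℝ => x * rexp (-b * x ^ 2)) atTop (nhds 0) := by
  have h := rpow_mul_exp_neg_mul_sq_isLittleO_exp_neg hb 1
  have h2 : Tendsto (fun x : ℝ => rexp (-(1/2) * x)) atTop (nhds 0) := by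
    have := tendsto_exp_neg_atTop_nhds_zero.comp
      (tendsto_id.const_mul_atTop (by norm_num : (0:ℝ) < 1/2))
    simpa [Function.comp_def, neg_mul] using this
  have h3 := h.trans_tendsto h2
  refine h3.congr' ?_
  filter_upwards [eventually_ge_atTop (0:ℝ)] with x hx
  rw [rpow_one]

lemma aux_tendsto_mul_exp_atBot {b : ℝ} (hb : 0 < b) :
    Tendsto (fun x : ℝ => x * rexp (-b * x ^ 2)) atBot (nhds 0) := by
  have h := (aux_tendsto_mul_exp_atTop hb).comp tendsto_neg_atBot_atTop
  have heq : (fun x : ℝ => (-x) * rexp (-b * (-x) ^ 2)) = fun x : ℝ => -(x * rexp (-b * x ^ 2)) := by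
    funext x; ring_nf
  rw [Function.comp_def] at h
  simp only [heq] at h
  simpa using h.neg

lemma aux_integrable_sq_mul_exp {b : ℝ} (hb : 0 < b) :
    Integrable (fun x : ℝ => x ^ 2 * rexp (-b * x ^ 2)) := by
  have h := integrable_rpow_mul_exp_neg_mul_sq hb (by norm_num : (-1:ℝ) < 2)
  have : (fun x : ℝ => x ^ (2:ℝ) * rexp (-b * x ^ 2)) = fun x : ℝ => x ^ 2 * rexp (-b * x ^ 2) := by
    funext x
    rw [show (2:ℝ) = ((2:ℕ):ℝ) by norm_num, rpow_natCast]
  rwa [this] at h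

lemma aux_hasDerivAt {b : ℝ} (x : ℝ) :
    HasDerivAt (fun x : ℝ => x * rexp (-b * x ^ 2))
      (rexp (-b * x ^ 2) - 2 * b * (x ^ 2 * rexp (-b * x ^ 2))) x := by
  have h1 : HasDerivAt (fun x : ℝ => -b * x ^ 2) (-b * (2 * x)) x := by
    simpa using ((hasDerivAt_pow 2 x).const_mul (-b))
  have h2 : HasDerivAt (fun x : ℝ => rexp (-b * x ^ 2)) (rexp (-b * x ^ 2) * (-b * (2 * x))) x :=
    h1.exp
  have h3 : HasDerivAt (fun y : ℝ => y * rexp (-b * y ^ 2))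
      (1 * rexp (-b * x ^ 2) + x * (rexp (-b * x ^ 2) * (-b * (2 * x)))) x :=
    (hasDerivAt_id x).mul h2
  convert h3 using 1
  ring

lemma aux_integral_sq_mul_exp {b : ℝ} (hb : 0 < b) :
    ∫ x : ℝ, x ^ 2 * rexp (-b * x ^ 2) = √(π / b) / (2 * b) := by
  set f' : ℝ → ℝ := fun x => rexp (-b * x ^ 2) - 2 * b * (x ^ 2 * rexp (-b * x ^ 2)) with hf'
  have hint : Integrable f' := (integrable_exp_neg_mul_sq hb).sub
    ((aux_integrable_sq_mul_exp hb).const_mul (2 * b))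
  have hIoi : ∫ x in Ioi (0:ℝ), f' x = 0 - (0 * rexp (-b * 0 ^ 2)) := by
    refine integral_Ioi_of_hasDerivAt_of_tendsto ?_ (fun x _ => aux_hasDerivAt x)
      hint.integrableOn (aux_tendsto_mul_exp_atTop hb)
    exact (Continuous.continuousWithinAt (by continuity))
  have hIic : ∫ x in Iic (0:ℝ), f' x = (0 * rexp (-b * 0 ^ 2)) - 0 := by
    refine integral_Iic_of_hasDerivAt_of_tendsto ?_ (fun x _ => aux_hasDerivAt x)
      hint.integrableOn (aux_tendsto_mul_exp_atBot hb)
    exact (Continuous.continuousWithinAt (by continuity))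
  have htot : ∫ x : ℝ, f' x = 0 := by
    rw [← intervalIntegral.integral_Iic_add_Ioi hint.integrableOn hint.integrableOn, hIoi, hIic]; ring
  rw [hf'] at htot
  rw [integral_sub (integrable_exp_neg_mul_sq hb)
    ((aux_integrable_sq_mul_exp hb).const_mul (2 * b)),
    integral_const_mul, integral_gaussian, sub_eq_zero] at htot
  field_simp at htot ⊢
  linarith



lemma aux_integral_odd_exp {b : ℝ} : ∫ x : ℝ, x * rexp (-b * x ^ 2) = 0 := by
  have h := integral_neg_eq_self (fun x : ℝ => x * rexp (-b * x ^ 2)) volume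
  simp only [neg_sq, neg_mul] at h
  rw [integral_neg] at h
  simp only [neg_mul] at h ⊢
  linarith

/-- rewrite integral against gaussianReal as weighted Lebesgue integral -/
lemma aux_integral_gaussianReal {v : ℝ≥0} (hv : v ≠ 0) (g : ℝ → ℝ) :
    ∫ x, g x ∂(gaussianReal 0 v)
      = ∫ x, gaussianPDFReal 0 v x * g x := by
  rw [gaussianReal_of_var_ne_zero 0 hv]
  have : gaussianPDF 0 v = fun x => ((Real.toNNReal (gaussianPDFReal 0 v x) : ℝ≥0) : ℝ≥0∞) := by
    funext x; rfl
  rw [this, integral_withDensity_eq_integral_smul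
    ((measurable_gaussianPDFReal 0 v).real_toNNReal) g]
  congr 1
  funext x
  rw [NNReal.smul_def, smul_eq_mul, Real.coe_toNNReal _ (gaussianPDFReal_nonneg 0 v x)]

lemma aux_gaussianPDFReal_eq {v : ℝ≥0} (x : ℝ) :
    gaussianPDFReal 0 v x = (√(2 * π * v))⁻¹ * rexp (-(2 * (v:ℝ))⁻¹ * x ^ 2) := by
  rw [gaussianPDFReal]
  congr 1
  rw [sub_zero]
  congr 1
  field_simp

lemma aux_integral_id_gaussianReal {v : ℝ≥0} : ∫ x, x ∂(gaussianReal 0 v) = (0:ℝ) := by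
  by_cases hv : v = 0
  · simp [hv]
  · rw [aux_integral_gaussianReal hv]
    have : ∀ x : ℝ, gaussianPDFReal 0 v x * x
        = (√(2 * π * v))⁻¹ * (x * rexp (-(2 * (v:ℝ))⁻¹ * x ^ 2)) := by
      intro x; rw [aux_gaussianPDFReal_eq]; ring
    simp_rw [this]
    rw [integral_const_mul, aux_integral_odd_exp, mul_zero]

lemma aux_integral_sq_gaussianReal {v : ℝ≥0} : ∫ x, x ^ 2 ∂(gaussianReal 0 v) = (v:ℝ) := by
  by_cases hv : v = 0
  · simp [hv]
  · have hvpos : (0:ℝ) < v := by exact_mod_cast zero_lt_iff.2 hv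
    have hb : (0:ℝ) < (2 * (v:ℝ))⁻¹ := by positivity
    rw [aux_integral_gaussianReal hv]
    have : ∀ x : ℝ, gaussianPDFReal 0 v x * x ^ 2
        = (√(2 * π * v))⁻¹ * (x ^ 2 * rexp (-(2 * (v:ℝ))⁻¹ * x ^ 2)) := by
      intro x; rw [aux_gaussianPDFReal_eq]; ring
    simp_rw [this]
    rw [integral_const_mul, aux_integral_sq_mul_exp hb]
    have h1 : π / (2 * (v:ℝ))⁻¹ = 2 * π * v := by field_simp
    have h2 : (2 * (2 * (v:ℝ))⁻¹) = (v:ℝ)⁻¹ := by field_simp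
    rw [h1, h2]
    have h3 : √(2 * π * v) ≠ 0 := by positivity
    field_simp

lemma aux_integrable_sq_gaussianReal {v : ℝ≥0} :
    Integrable (fun x : ℝ => x ^ 2) (gaussianReal 0 v) := by
  by_cases hv : v = 0
  · simp only [hv, gaussianReal_zero_var]
    refine ⟨(measurable_id.pow_const 2).aestronglyMeasurable, ?_⟩
    rw [HasFiniteIntegral, lintegral_dirac]
    exact ENNReal.coe_lt_top
  · have hvpos : (0:ℝ) < v := by exact_mod_cast zero_lt_iff.2 hv
    have hb : (0:ℝ) < (2 * (v:ℝ))⁻¹ := by positivity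
    rw [gaussianReal_of_var_ne_zero 0 hv]
    rw [integrable_withDensity_iff (measurable_gaussianPDF 0 v)
      (Filter.Eventually.of_forall fun x => ENNReal.ofReal_lt_top)]
    have : ∀ x : ℝ, x ^ 2 * (gaussianPDF 0 v x).toReal
        = (√(2 * π * v))⁻¹ * (x ^ 2 * rexp (-(2 * (v:ℝ))⁻¹ * x ^ 2)) := by
      intro x
      rw [gaussianPDF, ENNReal.toReal_ofReal (gaussianPDFReal_nonneg 0 v x),
        aux_gaussianPDFReal_eq]
      ring
    simp_rw [this]
    exact (aux_integrable_sq_mul_exp hb).const_mul _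

lemma aux_memℒp_two_id_gaussianReal {v : ℝ≥0} :
    MemLp (fun x : ℝ => x) 2 (gaussianReal 0 v) := by
  rw [show (fun x : ℝ => x) = id from rfl]
  rw [memLp_two_iff_integrable_sq aestronglyMeasurable_id]
  simp only [id]
  exact aux_integrable_sq_gaussianReal


end AuxGaussian

section AuxVec
open scoped NNReal ENNReal


section Vec
variable {Ω : Type*} [MeasurableSpace Ω] {μ : Measure Ω} [IsProbabilityMeasure μ]
  {d : ℕ} {s : ℝ} {ξ : Ω → EuclideanSpace ℝ (Fin d)}

lemma aux_integrable_mul_of_memℒp_two {f g : Ω → ℝ} (hf : MemLp f 2 μ) (hg : MemLp g 2 μ) :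
    Integrable (fun ω => f ω * g ω) μ := by
  have hf2 : Integrable (fun ω => f ω ^ 2) μ :=
    (memLp_two_iff_integrable_sq hf.1).mp hf
  have hg2 : Integrable (fun ω => g ω ^ 2) μ :=
    (memLp_two_iff_integrable_sq hg.1).mp hg
  refine Integrable.mono' (((hf2.add hg2).div_const 2)) (hf.1.mul hg.1) ?_
  filter_upwards with ω
  simp only [Pi.add_apply]
  rw [Real.norm_eq_abs, abs_mul]
  nlinarith [abs_nonneg (f ω), abs_nonneg (g ω), sq_abs (f ω), sq_abs (g ω),
    sq_nonneg (|f ω| - |g ω|)]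

lemma gv_inner_meas (hξ : IsCenteredGaussianVec μ d s ξ) (t : EuclideanSpace ℝ (Fin d)) :
    Measurable fun ω => ⟪t, ξ ω⟫ :=
  measurable_const.inner hξ.1

lemma gv_memℒp (hξ : IsCenteredGaussianVec μ d s ξ) (t : EuclideanSpace ℝ (Fin d)) :
    MemLp (fun ω => ⟪t, ξ ω⟫) 2 μ := by
  have h : MemLp (fun x : ℝ => x) 2 (Measure.map (fun ω => ⟪t, ξ ω⟫) μ) := by
    rw [hξ.2 t]; exact aux_memℒp_two_id_gaussianReal
  have := (memLp_map_measure_iff aestronglyMeasurable_id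
    (gv_inner_meas hξ t).aemeasurable).mp h
  simpa [Function.comp_def] using this

lemma gv_integral_inner (hξ : IsCenteredGaussianVec μ d s ξ) (t : EuclideanSpace ℝ (Fin d)) :
    ∫ ω, ⟪t, ξ ω⟫ ∂μ = 0 := by
  have h := integral_map (μ := μ) (f := fun x : ℝ => x) (gv_inner_meas hξ t).aemeasurable
    aestronglyMeasurable_id
  rw [← h, hξ.2 t, aux_integral_id_gaussianReal]

lemma gv_integral_inner_sq (hs : 0 ≤ s) (hξ : IsCenteredGaussianVec μ d s ξ)
    (t : EuclideanSpace ℝ (Fin d)) :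
    ∫ ω, ⟪t, ξ ω⟫ ^ 2 ∂μ = s * ‖t‖ ^ 2 := by
  have h := integral_map (μ := μ) (f := fun x : ℝ => x ^ 2) (gv_inner_meas hξ t).aemeasurable
    (measurable_id.pow_const 2).aestronglyMeasurable
  rw [← h, hξ.2 t, aux_integral_sq_gaussianReal,
    Real.coe_toNNReal _ (by positivity)]

lemma gv_coord_eq (i : Fin d) (ω : Ω) :
    ξ ω i = ⟪(EuclideanSpace.single i (1:ℝ)), ξ ω⟫ := by
  rw [EuclideanSpace.inner_single_left]
  simp

lemma gv_memℒp_coord (hξ : IsCenteredGaussianVec μ d s ξ) (i : Fin d) :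
    MemLp (fun ω => ξ ω i) 2 μ := by
  have := gv_memℒp hξ (EuclideanSpace.single i (1:ℝ))
  simpa [← gv_coord_eq] using this

lemma gv_integrable_coord (hξ : IsCenteredGaussianVec μ d s ξ) (i : Fin d) :
    Integrable (fun ω => ξ ω i) μ :=
  (gv_memℒp_coord hξ i).integrable one_le_two

lemma gv_integral_coord (hξ : IsCenteredGaussianVec μ d s ξ) (i : Fin d) :
    ∫ ω, ξ ω i ∂μ = 0 := by
  have := gv_integral_inner hξ (EuclideanSpace.single i (1:ℝ))
  simpa [← gv_coord_eq] using this

lemma gv_integral_coord_sq (hs : 0 ≤ s) (hξ : IsCenteredGaussianVec μ d s ξ) (i : Fin d) :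
    ∫ ω, ξ ω i * ξ ω i ∂μ = s := by
  have hns := gv_integral_inner_sq hs hξ (EuclideanSpace.single i (1:ℝ))
  rw [EuclideanSpace.norm_single] at hns
  simp only [norm_one, one_pow, mul_one] at hns
  rw [← hns]
  congr 1
  funext ω
  rw [← gv_coord_eq]
  ring

lemma gv_integral_mul_coord (hs : 0 ≤ s) (hξ : IsCenteredGaussianVec μ d s ξ) (i j : Fin d) :
    ∫ ω, ξ ω i * ξ ω j ∂μ = if i = j then s else 0 := by
  rcases eq_or_ne i j with rfl | hij
  · rw [if_pos rfl]; exact gv_integral_coord_sq hs hξ i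
  · rw [if_neg hij]
    set t : EuclideanSpace ℝ (Fin d) :=
      EuclideanSpace.single i (1:ℝ) + EuclideanSpace.single j (1:ℝ) with ht
    have hti : ∀ ω, ⟪t, ξ ω⟫ = ξ ω i + ξ ω j := by
      intro ω
      rw [ht, inner_add_left, ← gv_coord_eq, ← gv_coord_eq]
    have htn : ‖t‖ ^ 2 = 2 := by
      rw [ht, norm_add_sq_real]
      have hz : ⟪EuclideanSpace.single i (1:ℝ), EuclideanSpace.single j (1:ℝ)⟫ = 0 := by
        rw [EuclideanSpace.inner_single_left]
        simp [EuclideanSpace.single_apply, hij]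
      rw [hz, EuclideanSpace.norm_single, EuclideanSpace.norm_single]
      norm_num
    have hsq := gv_integral_inner_sq hs hξ t
    rw [htn] at hsq
    have hexp : ∀ ω, ⟪t, ξ ω⟫ ^ 2
        = ξ ω i * ξ ω i + 2 * (ξ ω i * ξ ω j) + ξ ω j * ξ ω j := by
      intro ω; rw [hti]; ring
    simp only [hexp] at hsq
    have ha : Integrable (fun ω => ξ ω i * ξ ω i) μ :=
      aux_integrable_mul_of_memℒp_two (gv_memℒp_coord hξ i) (gv_memℒp_coord hξ i)
    have hb : Integrable (fun ω => ξ ω i * ξ ω j) μ :=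
      aux_integrable_mul_of_memℒp_two (gv_memℒp_coord hξ i) (gv_memℒp_coord hξ j)
    have hc : Integrable (fun ω => ξ ω j * ξ ω j) μ :=
      aux_integrable_mul_of_memℒp_two (gv_memℒp_coord hξ j) (gv_memℒp_coord hξ j)
    have hb2 : Integrable (fun ω => 2 * (ξ ω i * ξ ω j)) μ := hb.const_mul 2
    have hab : Integrable (fun ω => ξ ω i * ξ ω i + 2 * (ξ ω i * ξ ω j)) μ := ha.add hb2
    rw [integral_add hab hc, integral_add ha hb2,
      integral_const_mul, gv_integral_coord_sq hs hξ i, gv_integral_coord_sq hs hξ j] at hsq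
    linarith

end Vec
end AuxVec

section AuxAlg
open scoped NNReal ENNReal


noncomputable def bil {n : ℕ} (A : Matrix (Fin n) (Fin n) ℝ)
    (x y : EuclideanSpace ℝ (Fin n)) : ℝ :=
  ∑ i, ∑ j, A i j * x i * y j

lemma toEuclideanLin_apply_coord {n n' : ℕ} (A : Matrix (Fin n) (Fin n') ℝ)
    (x : EuclideanSpace ℝ (Fin n')) (i : Fin n) :
    Matrix.toEuclideanLin A x i = ∑ j, A i j * x j := by
  rw [Matrix.toEuclideanLin_apply]
  simp [Matrix.mulVec, dotProduct]

lemma inner_toEuclideanLin {n : ℕ} (A : Matrix (Fin n) (Fin n) ℝ)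
    (x y : EuclideanSpace ℝ (Fin n)) :
    ⟪x, Matrix.toEuclideanLin A y⟫ = bil A x y := by
  rw [bil, PiLp.inner_apply]
  refine Finset.sum_congr rfl fun i _ => ?_
  rw [RCLike.inner_apply, toEuclideanLin_apply_coord, starRingEnd_apply, star_trivial,
    Finset.sum_mul]
  refine Finset.sum_congr rfl fun j _ => by ring

lemma quadCas_eq_bil {m : ℕ} (A : Matrix (Fin (m + m)) (Fin (m + m)) ℝ)
    (x : EuclideanSpace ℝ (Fin (m + m))) :
    quadCas m A x = (1 / 2 : ℝ) * bil A x x := by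
  rw [quadCas, inner_toEuclideanLin]

lemma bil_symm {n : ℕ} {A : Matrix (Fin n) (Fin n) ℝ} (hA : A.IsSymm)
    (x y : EuclideanSpace ℝ (Fin n)) : bil A x y = bil A y x := by
  rw [bil, bil, Finset.sum_comm]
  refine Finset.sum_congr rfl fun i _ => Finset.sum_congr rfl fun j _ => ?_
  rw [← hA.apply i j]
  ring

lemma bil_add_right {n : ℕ} (A : Matrix (Fin n) (Fin n) ℝ)
    (x y z : EuclideanSpace ℝ (Fin n)) : bil A x (y + z) = bil A x y + bil A x z := by
  simp only [bil, ← Finset.sum_add_distrib]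
  refine Finset.sum_congr rfl fun i _ => Finset.sum_congr rfl fun j _ => ?_
  simp only [PiLp.add_apply]
  ring

lemma bil_add_left {n : ℕ} (A : Matrix (Fin n) (Fin n) ℝ)
    (x y z : EuclideanSpace ℝ (Fin n)) : bil A (x + y) z = bil A x z + bil A y z := by
  simp only [bil, ← Finset.sum_add_distrib]
  refine Finset.sum_congr rfl fun i _ => Finset.sum_congr rfl fun j _ => ?_
  simp only [PiLp.add_apply]
  ring

lemma bil_sub_right {n : ℕ} (A : Matrix (Fin n) (Fin n) ℝ)
    (x y z : EuclideanSpace ℝ (Fin n)) : bil A x (y - z) = bil A x y - bil A x z := by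
  simp only [bil, ← Finset.sum_sub_distrib]
  refine Finset.sum_congr rfl fun i _ => Finset.sum_congr rfl fun j _ => ?_
  simp only [PiLp.sub_apply]
  ring

lemma bil_smul_left {n : ℕ} (A : Matrix (Fin n) (Fin n) ℝ) (c : ℝ)
    (x y : EuclideanSpace ℝ (Fin n)) : bil A (c • x) y = c * bil A x y := by
  simp only [bil, Finset.mul_sum]
  refine Finset.sum_congr rfl fun i _ => Finset.sum_congr rfl fun j _ => ?_
  simp only [PiLp.smul_apply, smul_eq_mul]
  ring

lemma quadCas_add {m : ℕ} {A : Matrix (Fin (m + m)) (Fin (m + m)) ℝ} (hA : A.IsSymm)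
    (x y : EuclideanSpace ℝ (Fin (m + m))) :
    quadCas m A (x + y) = quadCas m A x + bil A x y + quadCas m A y := by
  rw [quadCas_eq_bil, quadCas_eq_bil, quadCas_eq_bil, bil_add_left, bil_add_right,
    bil_add_right, bil_symm hA y x]
  ring

/-- The Casimir step: the deterministic midpoint update preserves the quadratic Casimir. -/
lemma quadCas_casimir_step {m : ℕ} {A : Matrix (Fin (m + m)) (Fin (m + m)) ℝ} (hA : A.IsSymm)
    (B : EuclideanSpace ℝ (Fin (m + m)) → Matrix (Fin (m + m)) (Fin (m + m)) ℝ)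
    (hCasimir : ∀ x : EuclideanSpace ℝ (Fin (m + m)),
      Matrix.vecMul (WithLp.equiv 2 (Fin (m + m) → ℝ) (Matrix.toEuclideanLin A x)) (B x) = 0)
    (h : ℝ) (x y g : EuclideanSpace ℝ (Fin (m + m)))
    (hy : y = x + h • (Matrix.toEuclideanLin (B ((2 : ℝ)⁻¹ • (x + y)))) g) :
    quadCas m A y = quadCas m A x := by
  set c : EuclideanSpace ℝ (Fin (m + m)) := (2 : ℝ)⁻¹ • (x + y) with hc
  set z : EuclideanSpace ℝ (Fin (m + m)) := h • (Matrix.toEuclideanLin (B c)) g with hz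
  have hyz : y - x = z := by rw [hy]; abel
  have hdiff : quadCas m A y - quadCas m A x = bil A c z := by
    have e1 : bil A (x + y) (y - x)
        = bil A x y - bil A x x + (bil A y y - bil A y x) := by
      rw [bil_add_left, bil_sub_right, bil_sub_right]
      try ring
    rw [quadCas_eq_bil, quadCas_eq_bil, hc, bil_smul_left, ← hyz, e1, bil_symm hA y x]
    ring
  have hAc : ∀ j, (∑ i, A i j * c i) = (Matrix.toEuclideanLin A c) j := by
    intro j
    rw [toEuclideanLin_apply_coord]
    refine Finset.sum_congr rfl fun i _ => ?_
    rw [← hA.apply j i]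
    try ring
  have hzero : ∀ k, (∑ j, (Matrix.toEuclideanLin A c) j * (B c) j k) = 0 := by
    intro k
    have := congrFun (hCasimir c) k
    simpa [Matrix.vecMul, dotProduct] using this
  have hbilcz : bil A c z = 0 := by
    have hzj : ∀ j, z j = h * ∑ k, (B c) j k * g k := by
      intro j
      rw [hz, PiLp.smul_apply, smul_eq_mul, toEuclideanLin_apply_coord]
      try rfl
    calc bil A c z = ∑ j, (∑ i, A i j * c i) * z j := by
          rw [bil, Finset.sum_comm]
          refine Finset.sum_congr rfl fun j _ => ?_
          rw [Finset.sum_mul]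
      _ = ∑ j, (Matrix.toEuclideanLin A c) j * (h * ∑ k, (B c) j k * g k) := by
          refine Finset.sum_congr rfl fun j _ => ?_
          rw [hAc, hzj]
      _ = ∑ j, ∑ k, h * ((Matrix.toEuclideanLin A c) j * ((B c) j k * g k)) := by
          refine Finset.sum_congr rfl fun j _ => ?_
          rw [Finset.mul_sum, Finset.mul_sum]
          refine Finset.sum_congr rfl fun k _ => by ring
      _ = ∑ k, ∑ j, h * ((Matrix.toEuclideanLin A c) j * ((B c) j k * g k)) := Finset.sum_comm
      _ = h * ∑ k, (∑ j, (Matrix.toEuclideanLin A c) j * (B c) j k) * g k := by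
          rw [Finset.mul_sum]
          refine Finset.sum_congr rfl fun k _ => ?_
          rw [Finset.sum_mul, Finset.mul_sum]
          refine Finset.sum_congr rfl fun j _ => by ring
      _ = 0 := by simp only [hzero, zero_mul, Finset.sum_const_zero, mul_zero]
  linarith [hdiff, hbilcz]



lemma pad_castAdd {m : ℕ} (v : EuclideanSpace ℝ (Fin m)) (j : Fin m) :
    pad m v (Fin.castAdd m j) = v j := by
  show Fin.append (WithLp.equiv 2 (Fin m → ℝ) v) 0 (Fin.castAdd m j) = _
  rw [Fin.append_left]
  rfl

lemma pad_natAdd {m : ℕ} (v : EuclideanSpace ℝ (Fin m)) (j : Fin m) :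
    pad m v (Fin.natAdd m j) = 0 := by
  show Fin.append (WithLp.equiv 2 (Fin m → ℝ) v) 0 (Fin.natAdd m j) = _
  rw [Fin.append_right]
  rfl

noncomputable def cvec {m d : ℕ} (A : Matrix (Fin (m + m)) (Fin (m + m)) ℝ)
    (Sig : Matrix (Fin m) (Fin d) ℝ) (x : EuclideanSpace ℝ (Fin (m + m))) (k : Fin d) : ℝ :=
  ∑ i, ∑ j : Fin m, A i (Fin.castAdd m j) * Sig j k * x i

lemma bil_pad {m d : ℕ} (A : Matrix (Fin (m + m)) (Fin (m + m)) ℝ)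
    (Sig : Matrix (Fin m) (Fin d) ℝ) (x : EuclideanSpace ℝ (Fin (m + m)))
    (u : EuclideanSpace ℝ (Fin d)) :
    bil A x (pad m (Matrix.toEuclideanLin Sig u)) = ∑ k, cvec A Sig x k * u k := by
  rw [bil]
  have step1 : ∀ i, (∑ j, A i j * x i * pad m (Matrix.toEuclideanLin Sig u) j)
      = ∑ j : Fin m, ∑ k, A i (Fin.castAdd m j) * Sig j k * x i * u k := by
    intro i
    rw [Fin.sum_univ_add]
    simp only [pad_castAdd, pad_natAdd, mul_zero, Finset.sum_const_zero, add_zero]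
    refine Finset.sum_congr rfl fun j _ => ?_
    rw [toEuclideanLin_apply_coord, Finset.mul_sum]
    refine Finset.sum_congr rfl fun k _ => by ring
  have step2 : ∀ k, cvec A Sig x k * u k
      = ∑ i, ∑ j : Fin m, A i (Fin.castAdd m j) * Sig j k * x i * u k := by
    intro k
    rw [cvec, Finset.sum_mul]
    refine Finset.sum_congr rfl fun i _ => ?_
    rw [Finset.sum_mul]
  calc (∑ i, ∑ j, A i j * x i * pad m (Matrix.toEuclideanLin Sig u) j)
      = ∑ i, ∑ j : Fin m, ∑ k, A i (Fin.castAdd m j) * Sig j k * x i * u k :=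
        Finset.sum_congr rfl fun i _ => step1 i
    _ = ∑ i, ∑ k, ∑ j : Fin m, A i (Fin.castAdd m j) * Sig j k * x i * u k :=
        Finset.sum_congr rfl fun i _ => Finset.sum_comm
    _ = ∑ k, ∑ i, ∑ j : Fin m, A i (Fin.castAdd m j) * Sig j k * x i * u k :=
        Finset.sum_comm
    _ = ∑ k, cvec A Sig x k * u k := Finset.sum_congr rfl fun k _ => (step2 k).symm

lemma cvec_pad {m d : ℕ} (A : Matrix (Fin (m + m)) (Fin (m + m)) ℝ)
    (Sig : Matrix (Fin m) (Fin d) ℝ) (u : EuclideanSpace ℝ (Fin d)) (k : Fin d) :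
    cvec A Sig (pad m (Matrix.toEuclideanLin Sig u)) k
      = ∑ l, (Sigᵀ * A.submatrix (Fin.castAdd m) (Fin.castAdd m) * Sig) l k * u l := by
  have entry : ∀ l, (Sigᵀ * A.submatrix (Fin.castAdd m) (Fin.castAdd m) * Sig) l k
      = ∑ i, ∑ j : Fin m, Sig i l * A (Fin.castAdd m i) (Fin.castAdd m j) * Sig j k := by
    intro l
    rw [Matrix.mul_apply]
    have : ∀ j : Fin m, (Sigᵀ * A.submatrix (Fin.castAdd m) (Fin.castAdd m)) l j * Sig j k
        = ∑ i, Sig i l * A (Fin.castAdd m i) (Fin.castAdd m j) * Sig j k := by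
      intro j
      rw [Matrix.mul_apply, Finset.sum_mul]
      refine Finset.sum_congr rfl fun i _ => ?_
      rw [Matrix.transpose_apply, Matrix.submatrix_apply]
    rw [Finset.sum_congr rfl fun j _ => this j, Finset.sum_comm]
  rw [cvec, Fin.sum_univ_add]
  have hz : ∀ i : Fin m,
      (∑ j : Fin m, A (Fin.natAdd m i) (Fin.castAdd m j) * Sig j k
        * pad m (Matrix.toEuclideanLin Sig u) (Fin.natAdd m i)) = 0 := by
    intro i; simp [pad_natAdd]
  rw [Finset.sum_congr rfl fun i _ => hz i, Finset.sum_const_zero, add_zero]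
  have step : ∀ i : Fin m,
      (∑ j : Fin m, A (Fin.castAdd m i) (Fin.castAdd m j) * Sig j k
        * pad m (Matrix.toEuclideanLin Sig u) (Fin.castAdd m i))
      = ∑ l, ∑ j : Fin m, Sig i l * A (Fin.castAdd m i) (Fin.castAdd m j) * Sig j k * u l := by
    intro i
    rw [Finset.sum_comm]
    refine Finset.sum_congr rfl fun j _ => ?_
    rw [pad_castAdd, toEuclideanLin_apply_coord, Finset.mul_sum]
    refine Finset.sum_congr rfl fun l _ => by ring
  calc (∑ i : Fin m, ∑ j : Fin m, A (Fin.castAdd m i) (Fin.castAdd m j) * Sig j k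
        * pad m (Matrix.toEuclideanLin Sig u) (Fin.castAdd m i))
      = ∑ i : Fin m, ∑ l, ∑ j : Fin m,
          Sig i l * A (Fin.castAdd m i) (Fin.castAdd m j) * Sig j k * u l :=
        Finset.sum_congr rfl fun i _ => step i
    _ = ∑ l, ∑ i : Fin m, ∑ j : Fin m,
          Sig i l * A (Fin.castAdd m i) (Fin.castAdd m j) * Sig j k * u l :=
        Finset.sum_comm
    _ = ∑ l, (Sigᵀ * A.submatrix (Fin.castAdd m) (Fin.castAdd m) * Sig) l k * u l := by
        refine Finset.sum_congr rfl fun l _ => ?_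
        rw [entry, Finset.sum_mul]
        refine Finset.sum_congr rfl fun i _ => ?_
        rw [Finset.sum_mul]

lemma bil_pad_pad {m d : ℕ} (A : Matrix (Fin (m + m)) (Fin (m + m)) ℝ)
    (Sig : Matrix (Fin m) (Fin d) ℝ) (u : EuclideanSpace ℝ (Fin d)) :
    bil A (pad m (Matrix.toEuclideanLin Sig u)) (pad m (Matrix.toEuclideanLin Sig u))
      = ∑ k, ∑ l, (Sigᵀ * A.submatrix (Fin.castAdd m) (Fin.castAdd m) * Sig) l k
          * (u l * u k) := by
  rw [bil_pad]
  refine Finset.sum_congr rfl fun k _ => ?_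
  rw [cvec_pad, Finset.sum_mul]
  refine Finset.sum_congr rfl fun l _ => by ring

lemma coord_abs_le {n : ℕ} (x : EuclideanSpace ℝ (Fin n)) (i : Fin n) : |x i| ≤ ‖x‖ := by
  rw [EuclideanSpace.norm_eq, ← Real.sqrt_sq_eq_abs]
  refine Real.sqrt_le_sqrt ?_
  have := Finset.single_le_sum (f := fun j => ‖x j‖ ^ 2)
    (fun j _ => sq_nonneg _) (Finset.mem_univ i)
  simpa [Real.norm_eq_abs, sq_abs] using this

lemma bil_abs_le {n : ℕ} (A : Matrix (Fin n) (Fin n) ℝ) (x y : EuclideanSpace ℝ (Fin n)) :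
    |bil A x y| ≤ (∑ i, ∑ j, |A i j|) * (‖x‖ * ‖y‖) := by
  rw [bil, Finset.sum_mul]
  refine (Finset.abs_sum_le_sum_abs _ _).trans (Finset.sum_le_sum fun i _ => ?_)
  rw [Finset.sum_mul]
  refine (Finset.abs_sum_le_sum_abs _ _).trans (Finset.sum_le_sum fun j _ => ?_)
  rw [abs_mul, abs_mul]
  have h1 := coord_abs_le x i
  have h2 := coord_abs_le y j
  have s1 : |A i j| * |x i| ≤ |A i j| * ‖x‖ := mul_le_mul_of_nonneg_left h1 (abs_nonneg _)
  have s2 : |A i j| * |x i| * |y j| ≤ |A i j| * ‖x‖ * ‖y‖ :=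
    mul_le_mul s1 h2 (abs_nonneg _) (by positivity)
  calc |A i j| * |x i| * |y j| ≤ |A i j| * ‖x‖ * ‖y‖ := s2
    _ = |A i j| * (‖x‖ * ‖y‖) := by ring

lemma cvec_abs_le {m d : ℕ} (A : Matrix (Fin (m + m)) (Fin (m + m)) ℝ)
    (Sig : Matrix (Fin m) (Fin d) ℝ) (x : EuclideanSpace ℝ (Fin (m + m))) (k : Fin d) :
    |cvec A Sig x k| ≤ (∑ i, ∑ j : Fin m, |A i (Fin.castAdd m j) * Sig j k|) * ‖x‖ := by
  rw [cvec, Finset.sum_mul]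
  refine (Finset.abs_sum_le_sum_abs _ _).trans (Finset.sum_le_sum fun i _ => ?_)
  rw [Finset.sum_mul]
  refine (Finset.abs_sum_le_sum_abs _ _).trans (Finset.sum_le_sum fun j _ => ?_)
  rw [abs_mul]
  exact mul_le_mul_of_nonneg_left (coord_abs_le x i) (abs_nonneg _)

lemma cvec_measurable {m d : ℕ} (A : Matrix (Fin (m + m)) (Fin (m + m)) ℝ)
    (Sig : Matrix (Fin m) (Fin d) ℝ) (k : Fin d) :
    Measurable fun x : EuclideanSpace ℝ (Fin (m + m)) => cvec A Sig x k := by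
  refine Finset.measurable_sum _ fun i _ => ?_
  refine Finset.measurable_sum _ fun j _ => ?_
  exact (by fun_prop : Measurable fun x : EuclideanSpace ℝ (Fin (m + m)) => x i).const_mul _

end AuxAlg

/-- **trace formula for the quadratic Casimir of the drift-preserving
scheme.** If `C(x) = ½ xᵀ A x` is a Casimir, i.e. `(Ax)ᵀ B(x) = 0` for all `x`,
then the iterates of the drift-preserving scheme satisfy
`E[C(Xₙ)] = E[C(X₀)] + ½ Tr(Σᵀ a Σ) tₙ` with `tₙ = n h`, `a` the upper-left block of `A`. -/
theorem drift_preserving_scheme_casimir_trace_formula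
    (m d : ℕ) (hm : 0 < m) (hd : 0 < d) (h : ℝ) (hh : 0 < h)
    (Sig : Matrix (Fin m) (Fin d) ℝ)
    (B : EuclideanSpace ℝ (Fin (m + m)) → Matrix (Fin (m + m)) (Fin (m + m)) ℝ)
    (hBcont : Continuous B) (hBskew : ∀ x, (B x)ᵀ = -(B x))
    (V : EuclideanSpace ℝ (Fin m) → ℝ) (hV : ContDiff ℝ 1 V)
    (A : Matrix (Fin (m + m)) (Fin (m + m)) ℝ) (hA : A.IsSymm)
    (hCasimir : ∀ x : EuclideanSpace ℝ (Fin (m + m)),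
      Matrix.vecMul (WithLp.equiv 2 (Fin (m + m) → ℝ) (Matrix.toEuclideanLin A x)) (B x) = 0)
    {Ω : Type*} [MeasurableSpace Ω] (μ : Measure Ω) [IsProbabilityMeasure μ]
    (X Y₁ Y₂ : ℕ → Ω → EuclideanSpace ℝ (Fin (m + m)))
    (ξ η : ℕ → Ω → EuclideanSpace ℝ (Fin d))
    (hξ : ∀ n, IsCenteredGaussianVec μ d (h / 2) (ξ n))
    (hη : ∀ n, IsCenteredGaussianVec μ d (h / 2) (η n))
    -- the families `(ξₙ)` and `(ηₙ)` are mutually independent …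
    (hmutual : iIndepFun (Sum.elim ξ η) μ)
    -- … and independent of the initial value `X₀`
    (hX₀indep : IndepFun (X 0) (fun ω (k : ℕ ⊕ ℕ) => Sum.elim ξ η k ω) μ)
    (hXmeas : ∀ n, Measurable (X n)) (hY₂meas : ∀ n, Measurable (Y₂ n))
    (hXint : ∀ n, Integrable (fun ω => ‖X n ω‖ ^ 2) μ)
    (hY₂int : ∀ n, Integrable (fun ω => ‖Y₂ n ω‖ ^ 2) μ)
    (hξX : ∀ n, IndepFun (ξ n) (X n) μ)
    (hηrest : ∀ n, IndepFun (fun ω => (X n ω, ξ n ω, Y₂ n ω)) (η n) μ)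
    (hY₁rel : ∀ n, ∀ᵐ ω ∂μ, Y₁ n ω = X n ω + pad m (Matrix.toEuclideanLin Sig (ξ n ω)))
    (hY₂rel : ∀ n, ∀ᵐ ω ∂μ,
      Y₂ n ω = Y₁ n ω + h • (Matrix.toEuclideanLin (B ((2 : ℝ)⁻¹ • (Y₁ n ω + Y₂ n ω))))
        (∫ θ in (0 : ℝ)..1, gradient (Ham m V) (Y₁ n ω + θ • (Y₂ n ω - Y₁ n ω))))
    (hXrel : ∀ n, ∀ᵐ ω ∂μ,
      X (n + 1) ω = Y₂ n ω + pad m (Matrix.toEuclideanLin Sig (η n ω))) :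
    ∀ n : ℕ, ∫ ω, quadCas m A (X n ω) ∂μ
      = (∫ ω, quadCas m A (X 0 ω) ∂μ)
        + 1 / 2 * (Sigᵀ * A.submatrix (Fin.castAdd m) (Fin.castAdd m) * Sig).trace
          * (n * h) := by
  classical
  have hs : (0:ℝ) ≤ h / 2 := by linarith
  set M : Matrix (Fin d) (Fin d) ℝ :=
    Sigᵀ * A.submatrix (Fin.castAdd m) (Fin.castAdd m) * Sig with hMdef
  have htr : M.trace = ∑ k, M k k := by
    simp [Matrix.trace, Matrix.diag]
  -- measurability of quadCas and bil
  have hbil_meas : Measurable fun x : EuclideanSpace ℝ (Fin (m + m)) => bil A x x := by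
    refine Finset.measurable_sum _ fun i _ => ?_
    refine Finset.measurable_sum _ fun j _ => ?_
    exact ((by fun_prop : Measurable fun x : EuclideanSpace ℝ (Fin (m + m)) => x i).const_mul _).mul
      (by fun_prop : Measurable fun x : EuclideanSpace ℝ (Fin (m + m)) => x j)
  have hquad_meas : Measurable (quadCas m A) := by
    have : quadCas m A = fun x => (1/2 : ℝ) * bil A x x := funext fun x => quadCas_eq_bil A x
    rw [this]
    exact hbil_meas.const_mul _
  -- integrability of quadCas of an L² random vector
  have quad_int : ∀ Z : Ω → EuclideanSpace ℝ (Fin (m + m)), Measurable Z →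
      Integrable (fun ω => ‖Z ω‖ ^ 2) μ →
      Integrable (fun ω => quadCas m A (Z ω)) μ := by
    intro Z hZm hZi
    set K : ℝ := ∑ i, ∑ j, |A i j| with hK
    refine Integrable.mono' (hZi.const_mul (1/2 * K))
      ((hquad_meas.comp hZm).aestronglyMeasurable) ?_
    filter_upwards with ω
    rw [Real.norm_eq_abs, quadCas_eq_bil, abs_mul]
    have hb := bil_abs_le A (Z ω) (Z ω)
    have : |(1/2 : ℝ)| = 1/2 := by norm_num
    rw [this]
    calc 1/2 * |bil A (Z ω) (Z ω)| ≤ 1/2 * (K * (‖Z ω‖ * ‖Z ω‖)) := by linarith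
      _ = 1/2 * K * ‖Z ω‖ ^ 2 := by ring
  -- cross terms: integrable and integral zero
  have cross_term : ∀ (Z : Ω → EuclideanSpace ℝ (Fin (m + m)))
      (ζ : Ω → EuclideanSpace ℝ (Fin d)), Measurable Z →
      Integrable (fun ω => ‖Z ω‖ ^ 2) μ → IsCenteredGaussianVec μ d (h/2) ζ →
      IndepFun Z ζ μ →
      Integrable (fun ω => ∑ k, cvec A Sig (Z ω) k * ζ ω k) μ ∧
      ∫ ω, (∑ k, cvec A Sig (Z ω) k * ζ ω k) ∂μ = 0 := by
    intro Z ζ hZm hZi hζ hZζ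
    have hterm : ∀ k : Fin d,
        Integrable (fun ω => cvec A Sig (Z ω) k * ζ ω k) μ ∧
        ∫ ω, cvec A Sig (Z ω) k * ζ ω k ∂μ = 0 := by
      intro k
      set Kk : ℝ := ∑ i, ∑ j : Fin m, |A i (Fin.castAdd m j) * Sig j k| with hKk
      have hKk0 : 0 ≤ Kk :=
        Finset.sum_nonneg fun i _ => Finset.sum_nonneg fun j _ => abs_nonneg _
      have hcZ : Integrable (fun ω => cvec A Sig (Z ω) k) μ := by
        refine Integrable.mono' (((integrable_const (1:ℝ)).add hZi).const_mul Kk)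
          (((cvec_measurable A Sig k).comp hZm).aestronglyMeasurable) ?_
        filter_upwards with ω
        rw [Real.norm_eq_abs]
        have h1 := cvec_abs_le A Sig (Z ω) k
        have h2 : ‖Z ω‖ ≤ 1 + ‖Z ω‖ ^ 2 := by nlinarith [sq_nonneg (‖Z ω‖ - 1)]
        calc |cvec A Sig (Z ω) k| ≤ Kk * ‖Z ω‖ := h1
          _ ≤ Kk * (1 + ‖Z ω‖ ^ 2) := mul_le_mul_of_nonneg_left h2 hKk0
      have hζk : Integrable (fun ω => ζ ω k) μ := gv_integrable_coord hζ k
      have hind : IndepFun (fun ω => cvec A Sig (Z ω) k) (fun ω => ζ ω k) μ :=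
        hZζ.comp (cvec_measurable A Sig k)
          (by fun_prop : Measurable fun x : EuclideanSpace ℝ (Fin d) => x k)
      refine ⟨hind.integrable_mul hcZ hζk, ?_⟩
      have := hind.integral_fun_mul_eq_mul_integral hcZ.aestronglyMeasurable
        hζk.aestronglyMeasurable
      calc ∫ ω, cvec A Sig (Z ω) k * ζ ω k ∂μ
          = (∫ ω, cvec A Sig (Z ω) k ∂μ) * ∫ ω, ζ ω k ∂μ := this
        _ = 0 := by rw [gv_integral_coord hζ k, mul_zero]
    constructor
    · exact integrable_finset_sum _ fun k _ => (hterm k).1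
    · rw [integral_finset_sum _ fun k _ => (hterm k).1]
      simp only [(fun k => (hterm k).2)]
      simp
  -- quadratic gaussian terms: integrable and integral (h/2)·tr
  have quad_term : ∀ ζ : Ω → EuclideanSpace ℝ (Fin d),
      IsCenteredGaussianVec μ d (h/2) ζ →
      Integrable (fun ω => ∑ k, ∑ l, M l k * (ζ ω l * ζ ω k)) μ ∧
      ∫ ω, (∑ k, ∑ l, M l k * (ζ ω l * ζ ω k)) ∂μ = h/2 * M.trace := by
    intro ζ hζ
    have hint : ∀ k l : Fin d, Integrable (fun ω => M l k * (ζ ω l * ζ ω k)) μ :=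
      fun k l => (aux_integrable_mul_of_memℒp_two
        (gv_memℒp_coord hζ l) (gv_memℒp_coord hζ k)).const_mul _
    have hint2 : ∀ k : Fin d, Integrable (fun ω => ∑ l, M l k * (ζ ω l * ζ ω k)) μ :=
      fun k => integrable_finset_sum _ fun l _ => hint k l
    refine ⟨integrable_finset_sum _ fun k _ => hint2 k, ?_⟩
    rw [integral_finset_sum _ fun k _ => hint2 k]
    have hval : ∀ k : Fin d, ∫ ω, (∑ l, M l k * (ζ ω l * ζ ω k)) ∂μ = M k k * (h/2) := by
      intro k
      rw [integral_finset_sum _ fun l _ => hint k l]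
      have : ∀ l : Fin d, ∫ ω, M l k * (ζ ω l * ζ ω k) ∂μ
          = M l k * (if l = k then h/2 else 0) := by
        intro l
        rw [integral_const_mul, gv_integral_mul_coord hs hζ l k]
      simp only [this]
      simp [Finset.sum_ite_eq, mul_ite, mul_zero]
    simp only [hval]
    rw [htr, ← Finset.sum_mul]
    ring
  -- one-step recursion
  have key : ∀ n : ℕ, ∫ ω, quadCas m A (X (n+1) ω) ∂μ
      = (∫ ω, quadCas m A (X n ω) ∂μ) + 1/2 * M.trace * h := by
    intro n
    have hae : ∀ᵐ ω ∂μ, quadCas m A (X (n+1) ω)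
        = quadCas m A (X n ω)
          + (∑ k, cvec A Sig (X n ω) k * ξ n ω k)
          + (1/2 : ℝ) * (∑ k, ∑ l, M l k * (ξ n ω l * ξ n ω k))
          + (∑ k, cvec A Sig (Y₂ n ω) k * η n ω k)
          + (1/2 : ℝ) * (∑ k, ∑ l, M l k * (η n ω l * η n ω k)) := by
      filter_upwards [hY₁rel n, hY₂rel n, hXrel n] with ω h1 h2 h3
      have e3 : quadCas m A (X (n+1) ω)
          = quadCas m A (Y₂ n ω)
            + bil A (Y₂ n ω) (pad m (Matrix.toEuclideanLin Sig (η n ω)))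
            + quadCas m A (pad m (Matrix.toEuclideanLin Sig (η n ω))) := by
        rw [h3, quadCas_add hA]
      have e2 : quadCas m A (Y₂ n ω) = quadCas m A (Y₁ n ω) :=
        quadCas_casimir_step hA B hCasimir h (Y₁ n ω) (Y₂ n ω) _ h2
      have e1 : quadCas m A (Y₁ n ω)
          = quadCas m A (X n ω)
            + bil A (X n ω) (pad m (Matrix.toEuclideanLin Sig (ξ n ω)))
            + quadCas m A (pad m (Matrix.toEuclideanLin Sig (ξ n ω))) := by
        rw [h1, quadCas_add hA]
      have eq2 : ∀ u : EuclideanSpace ℝ (Fin d),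
          quadCas m A (pad m (Matrix.toEuclideanLin Sig u))
          = (1/2 : ℝ) * (∑ k, ∑ l, M l k * (u l * u k)) := by
        intro u
        rw [quadCas_eq_bil, bil_pad_pad]
      rw [e3, e2, e1, bil_pad, bil_pad, eq2, eq2]
      try ring
    rw [integral_congr_ae hae]
    -- integrability of the pieces
    have I0 : Integrable (fun ω => quadCas m A (X n ω)) μ :=
      quad_int (X n) (hXmeas n) (hXint n)
    have hC1 := cross_term (X n) (ξ n) (hXmeas n) (hXint n) (hξ n) (hξX n).symm
    have hY₂η : IndepFun (Y₂ n) (η n) μ := by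
      have := (hηrest n).comp
        (φ := fun p : EuclideanSpace ℝ (Fin (m + m)) ×
          (EuclideanSpace ℝ (Fin d) × EuclideanSpace ℝ (Fin (m + m))) => p.2.2)
        (measurable_snd.comp measurable_snd) measurable_id
      simpa [Function.comp_def] using this
    have hC2 := cross_term (Y₂ n) (η n) (hY₂meas n) (hY₂int n) (hη n) hY₂η
    have hQ1 := quad_term (ξ n) (hξ n)
    have hQ2 := quad_term (η n) (hη n)
    have I1 := hC1.1
    have I2 : Integrable (fun ω =>
        (1/2 : ℝ) * (∑ k, ∑ l, M l k * (ξ n ω l * ξ n ω k))) μ :=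
      hQ1.1.const_mul (1/2 : ℝ)
    have I3 := hC2.1
    have I4 : Integrable (fun ω =>
        (1/2 : ℝ) * (∑ k, ∑ l, M l k * (η n ω l * η n ω k))) μ :=
      hQ2.1.const_mul (1/2 : ℝ)
    have J1 : Integrable (fun ω => quadCas m A (X n ω)
        + (∑ k, cvec A Sig (X n ω) k * ξ n ω k)) μ := I0.add I1
    have J2 : Integrable (fun ω => quadCas m A (X n ω)
        + (∑ k, cvec A Sig (X n ω) k * ξ n ω k)
        + (1/2 : ℝ) * (∑ k, ∑ l, M l k * (ξ n ω l * ξ n ω k))) μ := J1.add I2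
    have J3 : Integrable (fun ω => quadCas m A (X n ω)
        + (∑ k, cvec A Sig (X n ω) k * ξ n ω k)
        + (1/2 : ℝ) * (∑ k, ∑ l, M l k * (ξ n ω l * ξ n ω k))
        + (∑ k, cvec A Sig (Y₂ n ω) k * η n ω k)) μ := J2.add I3
    rw [integral_add J3 I4, integral_add J2 I3, integral_add J1 I2, integral_add I0 I1,
      integral_const_mul, integral_const_mul,
      hC1.2, hC2.2, hQ1.2, hQ2.2]
    ring
  -- conclude by induction
  intro n
  induction n with
  | zero => simp
  | succ n ih =>
    rw [key n, ih]
    push_cast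
    ring
end
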